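/- Let P₀ be a symmetric positive semidefinite n×n real matrix with eigenvalues σ₁ ≥ ⋯ ≥ σₙ ≥ 0 and orthonormal eigenvectors u₁, …, uₙ, and let R be a symmetric positive definite m×m real matrix (m < n) with eigenvalues ρ₁ ≥ ⋯ ≥ ρ_m > 0 and orthonormal eigenvectors v₁, …, v_m. Define H = Σ_{i=1}^{m} v_{m−i+1} uᵢᵀ. Then H Hᵀ = I_m and tr(P₀ − P₀ Hᵀ (H P₀ Hᵀ + R)⁻¹ H P₀) = Σ_{i=1}^{m} σᵢ ρ_{m−i+1}/(σᵢ + ρ_{m−i+1}) + Σ_{i=m+1}^{n} σᵢ. -/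

import Mathlib

open Matrix



private lemma vv_mul_vv {α β γ : Type*} [Fintype β] (a : α → ℝ) (b c : β → ℝ) (d : γ → ℝ) :
    vecMulVec a b * vecMulVec c d = (b ⬝ᵥ c) • vecMulVec a d := by
  ext i j
  simp only [Matrix.mul_apply, vecMulVec_apply, Matrix.smul_apply, dotProduct, smul_eq_mul,
    Finset.sum_mul]
  exact Finset.sum_congr rfl fun k _ => by ring

private lemma mul_vv {α β γ : Type*} [Fintype β] (M : Matrix α β ℝ) (a : β → ℝ) (b : γ → ℝ) :
    M * vecMulVec a b = vecMulVec (M *ᵥ a) b := by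
  ext i j
  simp only [Matrix.mul_apply, vecMulVec_apply, mulVec, dotProduct, Finset.sum_mul]
  exact Finset.sum_congr rfl fun k _ => by ring

private lemma vv_mul {α β γ : Type*} [Fintype β] (a : α → ℝ) (b : β → ℝ) (M : Matrix β γ ℝ) :
    vecMulVec a b * M = vecMulVec a (Mᵀ *ᵥ b) := by
  ext i j
  simp only [Matrix.mul_apply, vecMulVec_apply, mulVec, transpose_apply, dotProduct,
    Finset.mul_sum]
  exact Finset.sum_congr rfl fun k _ => by ring

private lemma trace_vv {α : Type*} [Fintype α] (a b : α → ℝ) :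
    Matrix.trace (vecMulVec a b) = a ⬝ᵥ b := by
  simp [Matrix.trace, vecMulVec_apply, dotProduct, Matrix.diag]

private lemma vv_smul_left {α β : Type*} (c : ℝ) (a : α → ℝ) (b : β → ℝ) :
    vecMulVec (c • a) b = c • vecMulVec a b := by
  ext i j; simp [vecMulVec_apply, mul_assoc]

private lemma vv_smul_right {α β : Type*} (c : ℝ) (a : α → ℝ) (b : β → ℝ) :
    vecMulVec a (c • b) = c • vecMulVec a b := by
  ext i j; simp [vecMulVec_apply]; ring

private lemma vv_transpose {α β : Type*} (a : α → ℝ) (b : β → ℝ) :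
    (vecMulVec a b)ᵀ = vecMulVec b a := by
  ext i j; simp [vecMulVec_apply]; ring

private lemma sum_vv_eq_one {k : ℕ} (w : Fin k → Fin k → ℝ)
    (hw : ∀ i j, w i ⬝ᵥ w j = if i = j then (1 : ℝ) else 0) :
    ∑ j, vecMulVec (w j) (w j) = (1 : Matrix (Fin k) (Fin k) ℝ) := by
  have h1 : (Matrix.of w) * (Matrix.of w)ᵀ = 1 := by
    ext i j
    simpa [Matrix.mul_apply, dotProduct, Matrix.one_apply] using hw i j
  have h2 : (Matrix.of w)ᵀ * (Matrix.of w) = 1 := mul_eq_one_comm.mp h1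
  rw [← h2]
  ext a b
  simp [Matrix.mul_apply, vecMulVec_apply, Matrix.sum_apply, mul_comm]

/-- Optimal noisy continuous sensing design, attainment (Kostas): with `P₀` PSD with
eigenpairs `(σ i, u i)` (`σ` nonincreasing) and `R` positive definite with eigenpairs
`(ρ j, v j)` (`ρ` nonincreasing), the matrix `H = ∑_{i<m} v_{m−i+1} u iᵀ` has orthonormal
rows and
`tr(P₀ − P₀ Hᵀ (H P₀ Hᵀ + R)⁻¹ H P₀) = ∑_{i<m} σ i ρ_{m−i+1}/(σ i + ρ_{m−i+1}) + ∑_{i≥m} σ i`. -/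
theorem stmt_8 {n m : ℕ} (hmn : m < n)
    (P₀ : Matrix (Fin n) (Fin n) ℝ) (hP₀ : P₀.PosSemidef)
    (σ : Fin n → ℝ) (hσ : Antitone σ) (hσ0 : ∀ i : Fin n, 0 ≤ σ i)
    (u : Fin n → Fin n → ℝ)
    (huortho : ∀ i j, u i ⬝ᵥ u j = if i = j then (1 : ℝ) else 0)
    (hueig : ∀ i, P₀ *ᵥ u i = σ i • u i)
    (R : Matrix (Fin m) (Fin m) ℝ) (hR : R.PosDef)
    (ρ : Fin m → ℝ) (hρ : Antitone ρ) (hρpos : ∀ j : Fin m, 0 < ρ j)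
    (v : Fin m → Fin m → ℝ)
    (hvortho : ∀ i j, v i ⬝ᵥ v j = if i = j then (1 : ℝ) else 0)
    (hveig : ∀ j, R *ᵥ v j = ρ j • v j)
    (H : Matrix (Fin m) (Fin n) ℝ)
    (hH : H = ∑ i : Fin m, Matrix.vecMulVec (v i.rev) (u (Fin.castLE hmn.le i))) :
    H * Hᵀ = 1 ∧
      Matrix.trace (P₀ - P₀ * Hᵀ * (H * P₀ * Hᵀ + R)⁻¹ * H * P₀) =
        (∑ i : Fin m, σ (Fin.castLE hmn.le i) * ρ i.rev /
            (σ (Fin.castLE hmn.le i) + ρ i.rev)) +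
          ∑ i ∈ Finset.univ.filter (fun i : Fin n => m ≤ (i : ℕ)), σ i := by
  classical
  have hPt : P₀ᵀ = P₀ := hP₀.isHermitian.eq
  set c : Fin m → Fin n := Fin.castLE hmn.le with hc
  have hcinj : ∀ a b : Fin m, c a = c b ↔ a = b := fun a b => Fin.castLE_inj
  have hsumu : ∑ i : Fin n, vecMulVec (u i) (u i) = 1 := sum_vv_eq_one u huortho
  have hsumv : ∑ j : Fin m, vecMulVec (v j) (v j) = 1 := sum_vv_eq_one v hvortho
  have hHt : Hᵀ = ∑ i : Fin m, vecMulVec (u (c i)) (v i.rev) := by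
    rw [hH, Matrix.transpose_sum]
    exact Finset.sum_congr rfl fun i _ => vv_transpose _ _
  -- H Hᵀ = 1
  have hHHT : H * Hᵀ = 1 := by
    rw [hHt, hH, Matrix.sum_mul]
    have step : ∀ i : Fin m,
        (vecMulVec (v i.rev) (u (c i))) * (∑ j : Fin m, vecMulVec (u (c j)) (v j.rev))
          = vecMulVec (v i.rev) (v i.rev) := by
      intro i
      rw [Matrix.mul_sum]
      simp only [vv_mul_vv, huortho, hcinj, ite_smul, one_smul, zero_smul,
        Finset.sum_ite_eq, Finset.mem_univ, if_true]
    rw [Finset.sum_congr rfl fun i _ => step i]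
    rw [Fintype.sum_bijective Fin.rev Fin.rev_bijective _
      (fun j => vecMulVec (v j) (v j)) (fun i => rfl)]
    exact hsumv
  refine ⟨hHHT, ?_⟩
  -- H P₀ Hᵀ
  have hHP : H * P₀ = ∑ i : Fin m, σ (c i) • vecMulVec (v i.rev) (u (c i)) := by
    rw [hH, Matrix.sum_mul]
    refine Finset.sum_congr rfl fun i _ => ?_
    rw [vv_mul, hPt, hueig, vv_smul_right]
  have hA : H * P₀ * Hᵀ = ∑ i : Fin m, σ (c i) • vecMulVec (v i.rev) (v i.rev) := by
    rw [hHt, hHP, Matrix.sum_mul]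
    refine Finset.sum_congr rfl fun i _ => ?_
    rw [Matrix.mul_sum]
    simp only [Matrix.smul_mul, vv_mul_vv, huortho, hcinj, ite_smul, one_smul, zero_smul,
      smul_ite, smul_zero, Finset.sum_ite_eq, Finset.mem_univ, if_true]
  have hM : H * P₀ * Hᵀ + R = ∑ j : Fin m, (σ (c j.rev) + ρ j) • vecMulVec (v j) (v j) := by
    have hArev : H * P₀ * Hᵀ = ∑ j : Fin m, σ (c j.rev) • vecMulVec (v j) (v j) := by
      rw [hA]
      exact Fintype.sum_bijective Fin.rev Fin.rev_bijective _
        (fun j => σ (c j.rev) • vecMulVec (v j) (v j)) (fun i => by simp [Fin.rev_rev])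
    have hRrep : R = ∑ j : Fin m, ρ j • vecMulVec (v j) (v j) := by
      conv_lhs => rw [← mul_one R, ← hsumv]
      rw [Matrix.mul_sum]
      exact Finset.sum_congr rfl fun j _ => by rw [mul_vv, hveig, vv_smul_left]
    rw [hArev, hRrep, ← Finset.sum_add_distrib]
    exact Finset.sum_congr rfl fun j _ => (add_smul _ _ _).symm
  have hlam : ∀ j : Fin m, 0 < σ (c j.rev) + ρ j :=
    fun j => add_pos_of_nonneg_of_pos (hσ0 _) (hρpos _)
  have hMinv : (H * P₀ * Hᵀ + R)⁻¹
      = ∑ j : Fin m, (σ (c j.rev) + ρ j)⁻¹ • vecMulVec (v j) (v j) := by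
    apply Matrix.inv_eq_right_inv
    rw [hM, Matrix.sum_mul, ← hsumv]
    refine Finset.sum_congr rfl fun j _ => ?_
    rw [Matrix.smul_mul, Matrix.mul_sum]
    simp only [Matrix.mul_smul, vv_mul_vv, hvortho, ite_smul, one_smul, zero_smul,
      smul_ite, smul_zero, Finset.sum_ite_eq, Finset.mem_univ, if_true, smul_smul]
    rw [mul_inv_cancel₀ (hlam j).ne', one_smul]
  have hPHt : P₀ * Hᵀ = ∑ i : Fin m, σ (c i) • vecMulVec (u (c i)) (v i.rev) := by
    rw [hHt, Matrix.mul_sum]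
    exact Finset.sum_congr rfl fun i _ => by rw [mul_vv, hueig, vv_smul_left]
  have hK1 : P₀ * Hᵀ * (H * P₀ * Hᵀ + R)⁻¹
      = ∑ i : Fin m, (σ (c i) * (σ (c i) + ρ i.rev)⁻¹) • vecMulVec (u (c i)) (v i.rev) := by
    rw [hMinv, hPHt, Matrix.sum_mul]
    refine Finset.sum_congr rfl fun i _ => ?_
    rw [Matrix.smul_mul, Matrix.mul_sum]
    simp only [Matrix.mul_smul, vv_mul_vv, hvortho, ite_smul, one_smul, zero_smul,
      smul_ite, smul_zero, Finset.sum_ite_eq, Finset.mem_univ, if_true, smul_smul,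
      Fin.rev_rev]
  have hK2 : P₀ * Hᵀ * (H * P₀ * Hᵀ + R)⁻¹ * H
      = ∑ i : Fin m, (σ (c i) * (σ (c i) + ρ i.rev)⁻¹) • vecMulVec (u (c i)) (u (c i)) := by
    rw [hK1, hH, Matrix.sum_mul]
    refine Finset.sum_congr rfl fun i _ => ?_
    rw [Matrix.smul_mul, Matrix.mul_sum]
    simp only [vv_mul_vv, hvortho, Fin.rev_inj, ite_smul, one_smul, zero_smul,
      smul_ite, smul_zero, Finset.sum_ite_eq, Finset.mem_univ, if_true]
  have hK : P₀ * Hᵀ * (H * P₀ * Hᵀ + R)⁻¹ * H * P₀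
      = ∑ i : Fin m,
          (σ (c i) * (σ (c i) + ρ i.rev)⁻¹ * σ (c i)) • vecMulVec (u (c i)) (u (c i)) := by
    rw [hK2, Matrix.sum_mul]
    refine Finset.sum_congr rfl fun i _ => ?_
    rw [Matrix.smul_mul, vv_mul, hPt, hueig, vv_smul_right, smul_smul]
  have htrP : Matrix.trace P₀ = ∑ i : Fin n, σ i := by
    have hPrep : P₀ = ∑ i : Fin n, σ i • vecMulVec (u i) (u i) := by
      conv_lhs => rw [← mul_one P₀, ← hsumu]
      rw [Matrix.mul_sum]
      exact Finset.sum_congr rfl fun i _ => by rw [mul_vv, hueig, vv_smul_left]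
    rw [hPrep, Matrix.trace_sum]
    simp [Matrix.trace_smul, trace_vv, huortho]
  have htrK : Matrix.trace (P₀ * Hᵀ * (H * P₀ * Hᵀ + R)⁻¹ * H * P₀)
      = ∑ i : Fin m, σ (c i) * (σ (c i) + ρ i.rev)⁻¹ * σ (c i) := by
    rw [hK, Matrix.trace_sum]
    simp [Matrix.trace_smul, trace_vv, huortho]
  rw [Matrix.trace_sub, htrP, htrK]
  have hsplit : ∑ i : Fin n, σ i
      = (∑ i : Fin m, σ (c i)) +
        ∑ i ∈ Finset.univ.filter (fun i : Fin n => m ≤ (i : ℕ)), σ i := by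
    rw [← Finset.sum_filter_add_sum_filter_not Finset.univ (fun i : Fin n => m ≤ (i : ℕ)) σ]
    rw [add_comm]
    congr 1
    have hmap : (Finset.univ : Finset (Fin m)).map ⟨c, Fin.castLE_injective hmn.le⟩
        = Finset.univ.filter (fun i : Fin n => ¬ m ≤ (i : ℕ)) := by
      ext x
      simp only [Finset.mem_map, Finset.mem_univ, true_and, Finset.mem_filter,
        Function.Embedding.coeFn_mk, not_le]
      constructor
      · rintro ⟨a, rfl⟩; exact a.2
      · intro hx; exact ⟨⟨x.1, hx⟩, by simp [hc, Fin.ext_iff]⟩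
    rw [← hmap, Finset.sum_map]
    rfl
  rw [hsplit, add_sub_right_comm]
  congr 1
  rw [← Finset.sum_sub_distrib]
  refine Finset.sum_congr rfl fun i _ => ?_
  have hpos : 0 < σ (c i) + ρ i.rev := add_pos_of_nonneg_of_pos (hσ0 _) (hρpos _)
  field_simp
  ring
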